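/- Let m, n, k be positive integers with n ≥ 2, and let ε, δ, β ≥ 0. Let A be a randomized algorithm mapping each histogram h : {1,…,m} → ℕ to a probability distribution over size-k subsets of {1,…,m}, and assume: (i) A is (ε,δ)-differentially private; (ii) for every histogram h, with probability at least 1−β the output of A(h) is (n−2,k)-accurate for h. Let S ⊆ {1,…,m} with k ≤ |S| and k dividing |S|. Let S_L be a uniformly random subset of S of cardinality |S|/k, let S_H = S ∖ S_L, and define the histogram h_{S_H,S_L} by h_{S_H,S_L}[i] = n for i ∈ S_H, h_{S_H,S_L}[i] = n−1 for i ∈ S_L, and h_{S_H,S_L}[i] = 0 for i ∉ S. Then P_{S_L, A}[ A(h_{S_H,S_L}) ∩ S_L ≠ ∅ ] ≥ e^{−ε} · (1 − β − δ − e^{−1}), where the probability is first over the uniform choice of S_L and then over the randomness of A. -/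

import Mathlib

open scoped ENNReal

/-- The `k`-th largest entry of a histogram `h : Fin m → ℕ` (for `1 ≤ k ≤ m`):
the largest value `v` such that at least `k` entries of `h` are `≥ v`. -/
noncomputable def kthLargest (m : ℕ) (h : Fin m → ℕ) (k : ℕ) : ℕ :=
  sSup {v : ℕ | k ≤ (Finset.univ.filter fun i => v ≤ h i).card}

lemma choose_exp_bound (k s : ℕ) (hk : 0 < k) (hs : 0 < s) :
    ((k * s - k).choose s : ℝ) ≤ Real.exp (-1) * ((k * s).choose s : ℝ) := by
  set a := k * s with ha
  have hka : k ≤ a := Nat.le_mul_of_pos_right k hs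
  have ha0 : 0 < a := lt_of_lt_of_le hk hka
  have hdesc : (a - k).descFactorial s * a ^ s ≤ a.descFactorial s * (a - k) ^ s := by
    rw [Nat.descFactorial_eq_prod_range, Nat.descFactorial_eq_prod_range]
    calc (∏ j ∈ Finset.range s, (a - k - j)) * a ^ s
        = ∏ j ∈ Finset.range s, (a - k - j) * a := by
          rw [Finset.prod_mul_distrib, Finset.prod_const, Finset.card_range]
      _ ≤ ∏ j ∈ Finset.range s, (a - j) * (a - k) := by
          apply Finset.prod_le_prod'
          intro j _
          rcases le_or_gt (k + j) a with h | h
          · have h1 : k ≤ a := hka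
            have h2 : j ≤ a - k := by omega
            have h3 : j ≤ a := by omega
            zify [h1, h2, h3]
            nlinarith [Int.natCast_nonneg j, Int.natCast_nonneg k]
          · have : a - k - j = 0 := by omega
            simp [this]
      _ = (∏ j ∈ Finset.range s, (a - j)) * (a - k) ^ s := by
          rw [Finset.prod_mul_distrib, Finset.prod_const, Finset.card_range]
  have hCf : ∀ b : ℕ, b.choose s * s.factorial = b.descFactorial s := by
    intro b
    rw [Nat.choose_eq_descFactorial_div_factorial,
      Nat.div_mul_cancel (Nat.factorial_dvd_descFactorial _ _)]
  have hnat : (a - k).choose s * a ^ s ≤ a.choose s * (a - k) ^ s := by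
    apply Nat.le_of_mul_le_mul_right _ (Nat.factorial_pos s)
    calc (a - k).choose s * a ^ s * s.factorial
        = (a - k).descFactorial s * a ^ s := by rw [mul_right_comm, hCf]
      _ ≤ a.descFactorial s * (a - k) ^ s := hdesc
      _ = a.choose s * (a - k) ^ s * s.factorial := by rw [mul_right_comm, hCf]
  have hR : ((a - k).choose s : ℝ) * (a : ℝ) ^ s ≤ (a.choose s : ℝ) * ((a : ℝ) - k) ^ s := by
    have := Nat.cast_le (α := ℝ) |>.mpr hnat
    push_cast [Nat.cast_sub hka] at this
    exact this
  have hap : (0 : ℝ) < (a : ℝ) ^ s := by positivity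
  have hstep : ((a - k).choose s : ℝ) ≤ (a.choose s : ℝ) * (((a : ℝ) - k) / a) ^ s := by
    rw [div_pow, ← mul_div_assoc, le_div_iff₀ hap]
    exact hR
  have hs0 : (s : ℝ) ≠ 0 := by positivity
  have hk0 : (k : ℝ) ≠ 0 := by positivity
  have hfrac : ((a : ℝ) - k) / a = 1 - 1 / (s : ℝ) := by
    rw [ha]; push_cast; field_simp
  have hs1 : (1 : ℝ) ≤ (s : ℝ) := by exact_mod_cast hs
  have hnn : (0 : ℝ) ≤ 1 - 1 / (s : ℝ) := by
    have : 1 / (s : ℝ) ≤ 1 := by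
      rw [div_le_one (by positivity)]; exact hs1
    linarith
  have hexp : (1 - 1 / (s : ℝ)) ^ s ≤ Real.exp (-1) := by
    have h1 : (1 : ℝ) - 1 / s ≤ Real.exp (-(1 / s)) := by
      have := Real.add_one_le_exp (-(1 / (s : ℝ)))
      linarith
    calc (1 - 1 / (s : ℝ)) ^ s ≤ (Real.exp (-(1 / s))) ^ s := pow_le_pow_left₀ hnn h1 s
      _ = Real.exp (-1) := by
          rw [← Real.exp_nat_mul]
          congr 1
          field_simp
  calc ((a - k).choose s : ℝ) ≤ (a.choose s : ℝ) * (((a : ℝ) - k) / a) ^ s := hstep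
    _ = (a.choose s : ℝ) * (1 - 1 / (s : ℝ)) ^ s := by rw [hfrac]
    _ ≤ (a.choose s : ℝ) * Real.exp (-1) := by
        apply mul_le_mul_of_nonneg_left hexp (by positivity)
    _ = Real.exp (-1) * (a.choose s : ℝ) := mul_comm _ _

lemma kth_eq (m n k : ℕ) (hn : 1 ≤ n) (hk : 0 < k) (S : Finset (Fin m)) (hSk : k ≤ S.card) :
    kthLargest m (fun i => if i ∈ S then n - 1 else 0) k = n - 1 := by
  unfold kthLargest
  beta_reduce
  have hset : {v : ℕ | k ≤ (Finset.univ.filter fun i =>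
      v ≤ (if i ∈ S then n - 1 else 0)).card} = Set.Iic (n - 1) := by
    ext v
    simp only [Set.mem_setOf_eq, Set.mem_Iic]
    constructor
    · intro hv
      by_contra hc
      push_neg at hc
      have hz : (Finset.univ.filter fun i =>
          v ≤ (if i ∈ S then n - 1 else 0)).card = 0 := by
        rw [Finset.card_eq_zero, Finset.filter_eq_empty_iff]
        intro i _
        by_cases hi : i ∈ S <;> simp only [hi, if_true, if_false] <;> omega
      omega
    · intro hv
      calc k ≤ S.card := hSk
        _ ≤ _ := by
            apply Finset.card_le_card
            intro i hi
            simp only [Finset.mem_filter, Finset.mem_univ, true_and, hi, if_true]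
            exact hv
  rw [hset, csSup_Iic]

/-- Let `A` be a randomized algorithm mapping histograms on
`{1,…,m}` to distributions over size-`k` subsets that is (i) `(ε,δ)`-DP and
(ii) `(n−2,k)`-accurate with probability `≥ 1−β` on every input.  Let
`S ⊆ {1,…,m}` with `k ≤ |S|` and `k ∣ |S|`, let `S_L` be a uniformly random
subset of `S` of size `|S|/k`, and let `h_{S_H,S_L}` be the histogram taking
value `n` on `S_H = S ∖ S_L`, `n−1` on `S_L`, and `0` off `S`.  Then
`P_{S_L,A}[A(h_{S_H,S_L}) ∩ S_L ≠ ∅] ≥ e^{−ε}(1−β−δ−e^{−1})`, where the outer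
probability averages uniformly over the choices of `S_L`. -/
theorem stmt_11 (m n k : ℕ) (hm : 0 < m) (hn : 2 ≤ n) (hk : 0 < k)
    (ε δ β : ℝ) (hε : 0 ≤ ε) (hδ : 0 ≤ δ) (hβ : 0 ≤ β)
    (A : (Fin m → ℕ) → PMF {s : Finset (Fin m) // s.card = k})
    (hDP : ∀ h h' : Fin m → ℕ, (∀ i, |(h i : ℤ) - (h' i : ℤ)| ≤ 1) →
      ∀ Z : Set {s : Finset (Fin m) // s.card = k},
        (A h).toOuterMeasure Z ≤
          ENNReal.ofReal (Real.exp ε) * (A h').toOuterMeasure Z +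
            ENNReal.ofReal δ)
    (hacc : ∀ h : Fin m → ℕ,
      ENNReal.ofReal (1 - β) ≤
        (A h).toOuterMeasure
          {o | ∀ i ∈ o.val, (kthLargest m h k : ℤ) - ((n : ℤ) - 2) ≤ (h i : ℤ)})
    (S : Finset (Fin m)) (hSk : k ≤ S.card) (hdvd : k ∣ S.card) :
    ENNReal.ofReal (Real.exp (-ε) * (1 - β - δ - Real.exp (-1))) ≤
      (∑ sL ∈ S.powersetCard (S.card / k),
          (A (fun i => if i ∈ sL then n - 1 else if i ∈ S then n else 0)).toOuterMeasure
            {o | (o.val ∩ sL).Nonempty}) /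
        ((S.powersetCard (S.card / k)).card : ℝ≥0∞) := by
  classical
  set a := S.card with haS
  set s := a / k with hsdef
  set 𝒮 := S.powersetCard s with hScdef
  set N := 𝒮.card with hNdef
  set C := (a - k).choose s with hCdef
  set h₀ : Fin m → ℕ := fun i => if i ∈ S then n - 1 else 0 with hh0
  set Zacc : Set {t : Finset (Fin m) // t.card = k} :=
    {o | ∀ i ∈ o.val, (kthLargest m h₀ k : ℤ) - ((n : ℤ) - 2) ≤ (h₀ i : ℤ)} with hZacc
  have hak : a = k * s := (Nat.mul_div_cancel' hdvd).symm
  have hs1 : 0 < s := Nat.div_pos hSk hk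
  have hsa : s ≤ a := Nat.div_le_self a k
  have hNval : N = a.choose s := Finset.card_powersetCard s S
  have hN0 : N ≠ 0 := by rw [hNval]; exact (Nat.choose_pos hsa).ne'
  have hCN : C ≤ N := by rw [hNval, hCdef]; exact Nat.choose_le_choose s (Nat.sub_le a k)
  have hkth : kthLargest m h₀ k = n - 1 := kth_eq m n k (by omega) hk S hSk
  -- accurate outputs are inside S
  have hsubS : ∀ o : {t : Finset (Fin m) // t.card = k}, o ∈ Zacc → o.val ⊆ S := by
    intro o ho i hi
    have h1 := ho i hi
    rw [hkth] at h1
    by_contra hiS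
    rw [hh0] at h1
    simp only [hiS, if_false] at h1
    push_cast [Nat.cast_sub (by omega : 1 ≤ n)] at h1
    omega
  -- counting lemma
  have hcount : ∀ o : {t : Finset (Fin m) // t.card = k}, o ∈ Zacc →
      (𝒮.filter fun sL => (o.val ∩ sL).Nonempty).card = N - C := by
    intro o ho
    have hoS := hsubS o ho
    have hneg : 𝒮.filter (fun sL => ¬ (o.val ∩ sL).Nonempty)
        = (S \ o.val).powersetCard s := by
      ext sL
      simp only [Finset.mem_filter, Finset.mem_powersetCard, hScdef,
        Finset.not_nonempty_iff_eq_empty, Finset.subset_sdiff]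
      constructor
      · rintro ⟨⟨h1, h2⟩, h3⟩
        exact ⟨⟨h1, by rw [Finset.disjoint_iff_inter_eq_empty, Finset.inter_comm]; exact h3⟩, h2⟩
      · rintro ⟨⟨h1, h2⟩, h3⟩
        exact ⟨⟨h1, h3⟩, by rw [Finset.inter_comm, ← Finset.disjoint_iff_inter_eq_empty]; exact h2⟩
    have hfc := Finset.card_filter_add_card_filter_not
      (s := 𝒮) (p := fun sL => (o.val ∩ sL).Nonempty)
    rw [hneg] at hfc
    have hcard2 : ((S \ o.val).powersetCard s).card = C := by
      rw [Finset.card_powersetCard, Finset.card_sdiff_of_subset hoS, o.prop, hCdef]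
    omega
  -- outer measure as finite sum
  have hμ : ∀ (h : Fin m → ℕ) (Z : Set {t : Finset (Fin m) // t.card = k}),
      (A h).toOuterMeasure Z = ∑ o : {t : Finset (Fin m) // t.card = k},
        Set.indicator Z (A h) o := by
    intro h Z
    rw [PMF.toOuterMeasure_apply, tsum_fintype]
  -- Step B
  have hB : ((N - C : ℕ) : ℝ≥0∞) * ENNReal.ofReal (1 - β) ≤
      ∑ sL ∈ 𝒮, (A h₀).toOuterMeasure {o | (o.val ∩ sL).Nonempty} := by
    have h1 : ∑ sL ∈ 𝒮, (A h₀).toOuterMeasure {o | (o.val ∩ sL).Nonempty}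
        = ∑ o : {t : Finset (Fin m) // t.card = k},
            ((𝒮.filter fun sL => (o.val ∩ sL).Nonempty).card : ℝ≥0∞) * (A h₀) o := by
      simp_rw [hμ]
      rw [Finset.sum_comm]
      refine Finset.sum_congr rfl fun o _ => ?_
      simp_rw [Set.indicator_apply, Set.mem_setOf_eq]
      rw [Finset.sum_ite, Finset.sum_const, Finset.sum_const_zero, add_zero, nsmul_eq_mul]
    rw [h1]
    calc ((N - C : ℕ) : ℝ≥0∞) * ENNReal.ofReal (1 - β)
        ≤ ((N - C : ℕ) : ℝ≥0∞) * (A h₀).toOuterMeasure Zacc :=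
          mul_le_mul_right (hacc h₀) _
      _ = ∑ o : {t : Finset (Fin m) // t.card = k},
            ((N - C : ℕ) : ℝ≥0∞) * Set.indicator Zacc (A h₀) o := by
          rw [hμ, Finset.mul_sum]
      _ ≤ _ := by
          apply Finset.sum_le_sum
          intro o _
          rw [Set.indicator_apply]
          by_cases ho : o ∈ Zacc
          · rw [if_pos ho, hcount o ho]
          · rw [if_neg ho, mul_zero]
            exact zero_le
  -- Step A : DP comparison
  have hA : ∀ sL ∈ 𝒮, (A h₀).toOuterMeasure {o | (o.val ∩ sL).Nonempty} ≤
      ENNReal.ofReal (Real.exp ε) *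
        (A (fun i => if i ∈ sL then n - 1 else if i ∈ S then n else 0)).toOuterMeasure
          {o | (o.val ∩ sL).Nonempty} + ENNReal.ofReal δ := by
    intro sL hsL
    have hsLS : sL ⊆ S := (Finset.mem_powersetCard.mp hsL).1
    apply hDP
    intro i
    rw [hh0]
    by_cases h1 : i ∈ sL
    · have h2 : i ∈ S := hsLS h1
      simp only [h1, h2, if_true]
      simp
    · by_cases h2 : i ∈ S
      · simp only [h1, h2, if_true, if_false]
        rw [abs_le]
        omega
      · simp only [h1, h2, if_false]
        simp
  have hAsum : ∑ sL ∈ 𝒮, (A h₀).toOuterMeasure {o | (o.val ∩ sL).Nonempty} ≤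
      ENNReal.ofReal (Real.exp ε) *
        (∑ sL ∈ 𝒮,
          (A (fun i => if i ∈ sL then n - 1 else if i ∈ S then n else 0)).toOuterMeasure
            {o | (o.val ∩ sL).Nonempty}) + (N : ℝ≥0∞) * ENNReal.ofReal δ := by
    calc ∑ sL ∈ 𝒮, (A h₀).toOuterMeasure {o | (o.val ∩ sL).Nonempty}
        ≤ ∑ sL ∈ 𝒮, (ENNReal.ofReal (Real.exp ε) *
            (A (fun i => if i ∈ sL then n - 1 else if i ∈ S then n else 0)).toOuterMeasure
              {o | (o.val ∩ sL).Nonempty} + ENNReal.ofReal δ) := Finset.sum_le_sum hA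
      _ = _ := by
          rw [Finset.sum_add_distrib, Finset.sum_const, ← Finset.mul_sum, nsmul_eq_mul, hNdef]
  set Sig := ∑ sL ∈ 𝒮,
      (A (fun i => if i ∈ sL then n - 1 else if i ∈ S then n else 0)).toOuterMeasure
        {o | (o.val ∩ sL).Nonempty} with hSig
  set r := 1 - β - δ - Real.exp (-1) with hrdef
  rcases le_or_gt r 0 with hr | hr
  · have hle : Real.exp (-ε) * r ≤ 0 :=
      mul_nonpos_of_nonneg_of_nonpos (Real.exp_pos _).le hr
    rw [ENNReal.ofReal_eq_zero.mpr hle]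
    exact zero_le
  · have hCreal : (C : ℝ) ≤ Real.exp (-1) * N := by
      rw [hNval, hCdef, hak]
      exact choose_exp_bound k s hk hs1
    have step1 : (N : ℝ≥0∞) * ENNReal.ofReal (1 - β) ≤
        ENNReal.ofReal (Real.exp ε) * Sig + (N : ℝ≥0∞) * ENNReal.ofReal δ
          + (N : ℝ≥0∞) * ENNReal.ofReal (Real.exp (-1)) := by
      have hsplit : (N : ℝ≥0∞) = ((N - C : ℕ) : ℝ≥0∞) + (C : ℝ≥0∞) := by
        rw [← Nat.cast_add]; congr 1; omega
      nth_rewrite 1 [hsplit]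
      rw [add_mul]
      apply add_le_add (hB.trans hAsum)
      calc (C : ℝ≥0∞) * ENNReal.ofReal (1 - β)
          ≤ (C : ℝ≥0∞) * 1 := mul_le_mul_right (ENNReal.ofReal_le_one.mpr (by linarith)) _
        _ = ENNReal.ofReal (C : ℝ) := by rw [mul_one, ENNReal.ofReal_natCast]
        _ ≤ ENNReal.ofReal (Real.exp (-1) * N) := ENNReal.ofReal_le_ofReal hCreal
        _ = ENNReal.ofReal (Real.exp (-1)) * ENNReal.ofReal (N : ℝ) :=
            ENNReal.ofReal_mul (Real.exp_pos _).le
        _ = (N : ℝ≥0∞) * ENNReal.ofReal (Real.exp (-1)) := by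
            rw [ENNReal.ofReal_natCast, mul_comm]
    have hofsum : ENNReal.ofReal (1 - β) =
        ENNReal.ofReal r + ENNReal.ofReal δ + ENNReal.ofReal (Real.exp (-1)) := by
      rw [← ENNReal.ofReal_add (le_of_lt hr) hδ,
        ← ENNReal.ofReal_add (by linarith) (Real.exp_pos _).le]
      congr 1
      rw [hrdef]; ring
    have hfin1 : (N : ℝ≥0∞) * ENNReal.ofReal δ ≠ ⊤ :=
      ENNReal.mul_ne_top (ENNReal.natCast_ne_top N) ENNReal.ofReal_ne_top
    have hfin2 : (N : ℝ≥0∞) * ENNReal.ofReal (Real.exp (-1)) ≠ ⊤ :=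
      ENNReal.mul_ne_top (ENNReal.natCast_ne_top N) ENNReal.ofReal_ne_top
    have step3 : (N : ℝ≥0∞) * ENNReal.ofReal r ≤ ENNReal.ofReal (Real.exp ε) * Sig := by
      have h' := step1
      rw [hofsum, mul_add, mul_add] at h'
      rwa [ENNReal.add_le_add_iff_right hfin2, ENNReal.add_le_add_iff_right hfin1] at h'
    have step4 : ENNReal.ofReal (Real.exp (-ε)) * ((N : ℝ≥0∞) * ENNReal.ofReal r) ≤ Sig := by
      calc ENNReal.ofReal (Real.exp (-ε)) * ((N : ℝ≥0∞) * ENNReal.ofReal r)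
          ≤ ENNReal.ofReal (Real.exp (-ε)) * (ENNReal.ofReal (Real.exp ε) * Sig) :=
            mul_le_mul_right step3 _
        _ = (ENNReal.ofReal (Real.exp (-ε)) * ENNReal.ofReal (Real.exp ε)) * Sig :=
            (mul_assoc _ _ _).symm
        _ = Sig := by
            rw [← ENNReal.ofReal_mul (Real.exp_pos _).le, ← Real.exp_add,
              neg_add_cancel, Real.exp_zero, ENNReal.ofReal_one, one_mul]
    rw [ENNReal.le_div_iff_mul_le (Or.inl (Nat.cast_ne_zero.mpr hN0))
      (Or.inl (ENNReal.natCast_ne_top N))]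
    rw [ENNReal.ofReal_mul (Real.exp_pos _).le]
    calc ENNReal.ofReal (Real.exp (-ε)) * ENNReal.ofReal r * (N : ℝ≥0∞)
        = ENNReal.ofReal (Real.exp (-ε)) * ((N : ℝ≥0∞) * ENNReal.ofReal r) := by ring
      _ ≤ Sig := step4
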